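/- Let γ ∈ (0,1) and L > 0 satisfy γ(1 + L) < 1, and define g : ℝ → ℝ by g(t) = γ^t((1 + L)^t − 1) (real exponents). Let t* = log(log γ / log(γ(1 + L))) / log(1 + L). Then t* > 0, (1 + L)^{t*} = log γ / log(γ(1 + L)), and g attains its maximum over [0, ∞) at t*, with maximum value g(t*) = γ^{t*} · log(1 + L) / (−log(γ(1 + L))); that is, g(t) ≤ γ^{t*} · log(1 + L) / (−log(γ(1 + L))) for all t ≥ 0, with equality at t = t*. -/

import Mathlib

open Real

/-- Closed-form maximizer of the discounted trajectory-divergence factor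
`g(t) = γ^t((1 + L)^t − 1)` (real exponents): with
`t* = log(log γ / log(γ(1 + L))) / log(1 + L)`, we have `t* > 0`,
`(1 + L)^{t*} = log γ / log(γ(1 + L))`, and `g` attains its maximum over `[0, ∞)`
at `t*`, with value `γ^{t*} · log(1 + L) / (−log(γ(1 + L)))`. -/
theorem discounted_divergence_factor_max (γ L : ℝ)
    (hγ0 : 0 < γ) (hγ1 : γ < 1) (hL : 0 < L) (h : γ * (1 + L) < 1) :
    0 < Real.log (Real.log γ / Real.log (γ * (1 + L))) / Real.log (1 + L) ∧
    (1 + L) ^ (Real.log (Real.log γ / Real.log (γ * (1 + L))) / Real.log (1 + L)) =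
      Real.log γ / Real.log (γ * (1 + L)) ∧
    γ ^ (Real.log (Real.log γ / Real.log (γ * (1 + L))) / Real.log (1 + L)) *
        ((1 + L) ^ (Real.log (Real.log γ / Real.log (γ * (1 + L))) / Real.log (1 + L)) - 1) =
      γ ^ (Real.log (Real.log γ / Real.log (γ * (1 + L))) / Real.log (1 + L)) *
        Real.log (1 + L) / (-Real.log (γ * (1 + L))) ∧
    ∀ t : ℝ, 0 ≤ t →
      γ ^ t * ((1 + L) ^ t - 1) ≤
        γ ^ (Real.log (Real.log γ / Real.log (γ * (1 + L))) / Real.log (1 + L)) *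
          Real.log (1 + L) / (-Real.log (γ * (1 + L))) := by
  have h1L : (1:ℝ) < 1 + L := by linarith
  have h1L0 : (0:ℝ) < 1 + L := by linarith
  have hγL0 : 0 < γ * (1 + L) := mul_pos hγ0 h1L0
  set a := Real.log γ with ha_def
  set b := Real.log (1 + L) with hb_def
  have ha : a < 0 := Real.log_neg hγ0 hγ1
  have hb : 0 < b := Real.log_pos h1L
  have hc_eq : Real.log (γ * (1 + L)) = a + b := Real.log_mul (ne_of_gt hγ0) (ne_of_gt h1L0)
  set c := Real.log (γ * (1 + L)) with hc_def
  have hc : c < 0 := Real.log_neg hγL0 h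
  have hcne : c ≠ 0 := ne_of_lt hc
  set r := a / c with hr_def
  have hr1 : 1 < r := by
    rw [hr_def, lt_div_iff_of_neg hc]
    linarith
  have hr0 : 0 < r := lt_trans one_pos hr1
  set T := Real.log r / b with hT_def
  have hT : 0 < T := div_pos (Real.log_pos hr1) hb
  have hbT : Real.exp (b * T) = r := by
    rw [show b * T = Real.log r by rw [hT_def]; field_simp]
    exact Real.exp_log hr0
  have hpow : (1 + L) ^ T = r := by
    rw [Real.rpow_def_of_pos h1L0, ← hb_def, hbT]
  have hr_sub : r - 1 = b / (-c) := by
    rw [hr_def, div_sub_one hcne, div_eq_div_iff hcne (neg_ne_zero.mpr hcne), hc_eq]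
    ring
  -- the function in exponential form
  set G : ℝ → ℝ := fun s => Real.exp (c * s) - Real.exp (a * s) with hG_def
  have hGt : ∀ t : ℝ, γ ^ t * ((1 + L) ^ t - 1) = G t := by
    intro t
    rw [hG_def]
    simp only []
    rw [Real.rpow_def_of_pos hγ0, Real.rpow_def_of_pos h1L0, ← ha_def, ← hb_def,
      mul_sub, ← Real.exp_add, hc_eq]
    ring_nf
  have hγT : γ ^ T = Real.exp (a * T) := by
    rw [Real.rpow_def_of_pos hγ0, ← ha_def]
  have hsplit : ∀ t : ℝ, Real.exp (c * t) = Real.exp (a * t) * Real.exp (b * t) := by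
    intro t
    rw [← Real.exp_add, hc_eq]; ring_nf
  have hGT : G T = γ ^ T * b / (-c) := by
    have hcT : Real.exp (c * T) = Real.exp (a * T) * r := by
      rw [hsplit T, hbT]
    rw [hG_def]
    simp only []
    rw [hcT, hγT]
    have h9 : Real.exp (a*T) * r - Real.exp (a*T) = Real.exp (a*T) * (r - 1) := by ring
    rw [h9, hr_sub, mul_div_assoc]
  -- derivative
  have hG' : ∀ t : ℝ, HasDerivAt G (c * Real.exp (c * t) - a * Real.exp (a * t)) t := by
    intro t
    have h1 : HasDerivAt (fun s : ℝ => Real.exp (c * s)) (Real.exp (c * t) * (c * 1)) t :=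
      ((hasDerivAt_id t).const_mul c).exp
    have h2 : HasDerivAt (fun s : ℝ => Real.exp (a * s)) (Real.exp (a * t) * (a * 1)) t :=
      ((hasDerivAt_id t).const_mul a).exp
    have h3 := h1.sub h2
    rw [show c * Real.exp (c * t) - a * Real.exp (a * t) = Real.exp (c * t) * (c * 1) - Real.exp (a * t) * (a * 1) by ring]
    exact h3
  have hGcont : Continuous G := by
    rw [hG_def]
    exact (Real.continuous_exp.comp (continuous_const.mul continuous_id)).sub
      (Real.continuous_exp.comp (continuous_const.mul continuous_id))
  have hcr : c * r = a := by
    rw [hr_def]; field_simp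
  -- sign of derivative
  have key1 : ∀ t : ℝ, t ≤ T → 0 ≤ c * Real.exp (c * t) - a * Real.exp (a * t) := by
    intro t ht
    have hbt : b * t ≤ b * T := mul_le_mul_of_nonneg_left ht hb.le
    have hexp : Real.exp (b * t) ≤ r := by
      rw [← hbT]
      exact Real.exp_le_exp.mpr hbt
    have h2 : c * r ≤ c * Real.exp (b * t) := mul_le_mul_of_nonpos_left hexp hc.le
    have h1 : a ≤ c * Real.exp (b * t) := by linarith [hcr]
    rw [hsplit t]
    have h3 : c * (Real.exp (a * t) * Real.exp (b * t)) - a * Real.exp (a * t)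
        = (c * Real.exp (b * t) - a) * Real.exp (a * t) := by ring
    rw [h3]
    exact mul_nonneg (by linarith) (Real.exp_pos _).le
  have key2 : ∀ t : ℝ, T ≤ t → c * Real.exp (c * t) - a * Real.exp (a * t) ≤ 0 := by
    intro t ht
    have hbt : b * T ≤ b * t := mul_le_mul_of_nonneg_left ht hb.le
    have hexp : r ≤ Real.exp (b * t) := by
      rw [← hbT]
      exact Real.exp_le_exp.mpr hbt
    have h2 : c * Real.exp (b * t) ≤ c * r := mul_le_mul_of_nonpos_left hexp hc.le
    have h1 : c * Real.exp (b * t) ≤ a := by linarith [hcr]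
    rw [hsplit t]
    have h3 : c * (Real.exp (a * t) * Real.exp (b * t)) - a * Real.exp (a * t)
        = (c * Real.exp (b * t) - a) * Real.exp (a * t) := by ring
    rw [h3]
    exact mul_nonpos_of_nonpos_of_nonneg (by linarith) (Real.exp_pos _).le
  have hmono : MonotoneOn G (Set.Icc 0 T) := by
    apply monotoneOn_of_deriv_nonneg (convex_Icc 0 T) hGcont.continuousOn
    · intro t _
      exact (hG' t).differentiableAt.differentiableWithinAt
    · intro t ht
      rw [interior_Icc] at ht
      rw [(hG' t).deriv]
      exact key1 t ht.2.le
  have hanti : AntitoneOn G (Set.Ici T) := by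
    apply antitoneOn_of_deriv_nonpos (convex_Ici T) hGcont.continuousOn
    · intro t _
      exact (hG' t).differentiableAt.differentiableWithinAt
    · intro t ht
      rw [interior_Ici] at ht
      rw [(hG' t).deriv]
      exact key2 t (le_of_lt ht)
  refine ⟨hT, hpow.trans hr_def, ?_, ?_⟩
  · rw [hpow, hr_sub, mul_div_assoc]
  · intro t ht0
    rw [hGt t, ← hGT]
    rcases le_total t T with h' | h'
    · exact hmono ⟨ht0, h'⟩ ⟨hT.le, le_refl T⟩ h'
    · exact hanti (le_refl T) h' h'
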